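/- Let p be a prime and R a commutative ring in which p is nilpotent. Let a ∈ R, let w ∈ W(R) be a p-typical Witt vector with F(w) = 0, where F denotes the Witt-vector Frobenius, and suppose ν ∈ W(R) satisfies V(ν) = p·1 − [a]·w in W(R), where V is the Verschiebung and [a] the Teichmüller representative of a. Then ν is a unit in W(R). -/

import Mathlib

open Function

namespace Stmt18Aux

variable {p : ℕ} [hp : Fact p.Prime] {R : Type*} [CommRing R]

local notation "𝕎" => WittVector p

lemma iter_versch_coeff_lt (y : 𝕎 R) : ∀ n i, i < n →
    ((WittVector.verschiebung)^[n] y).coeff i = 0 := by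
  intro n
  induction n with
  | zero => intro i h; omega
  | succ n ih =>
    intro i h
    rw [Function.iterate_succ_apply']
    match i with
    | 0 => exact WittVector.verschiebung_coeff_zero _
    | (i+1) =>
      rw [WittVector.verschiebung_coeff_succ]
      exact ih i (by omega)

lemma exists_iter_versch (u : 𝕎 R) (n : ℕ) (h : ∀ i < n, u.coeff i = 0) :
    ∃ y : 𝕎 R, (WittVector.verschiebung)^[n] y = u ∧ y.coeff 0 = u.coeff n := by
  refine ⟨WittVector.mk p (fun i => u.coeff (i + n)), ?_, by simp [WittVector.coeff_mk]⟩
  ext j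
  rcases lt_or_ge j n with hj | hj
  · rw [iter_versch_coeff_lt _ _ _ hj, h j hj]
  · obtain ⟨k, rfl⟩ : ∃ k, j = k + n := ⟨j - n, by omega⟩
    rw [WittVector.iterate_verschiebung_coeff]
    simp [WittVector.coeff_mk]

lemma iter_frob_iter_versch (y : 𝕎 R) (n : ℕ) :
    (WittVector.frobenius)^[n] ((WittVector.verschiebung)^[n] y) = y * (p : 𝕎 R) ^ n := by
  induction n generalizing y with
  | zero => simp
  | succ n ih =>
    rw [Function.iterate_succ_apply (f := ⇑(WittVector.verschiebung (p := p) (R := R))),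
      Function.iterate_succ_apply' (f := ⇑(WittVector.frobenius (p := p) (R := R))), ih]
    rw [map_mul, map_pow, map_natCast, WittVector.frobenius_verschiebung]
    ring

lemma mul_coeff_vanish (u v : 𝕎 R) (n : ℕ) (hu : ∀ i < n, u.coeff i = 0)
    (hv : ∀ i < n, v.coeff i = 0) :
    (∀ i < n, (u * v).coeff i = 0) ∧
      (u * v).coeff n = (p : R) ^ n * (u.coeff n * v.coeff n) := by
  obtain ⟨x, hx, hx0⟩ := exists_iter_versch u n hu
  obtain ⟨y, hy, hy0⟩ := exists_iter_versch v n hv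
  have key : u * v = (WittVector.verschiebung)^[n] (x * (y * (p : 𝕎 R) ^ n)) := by
    conv_lhs => rw [← hx, ← hy]
    rw [WittVector.iterate_verschiebung_mul_left, iter_frob_iter_versch]
  refine ⟨fun i hi => by rw [key]; exact iter_versch_coeff_lt _ _ _ hi, ?_⟩
  have h0 : (x * (y * (p : 𝕎 R) ^ n)).coeff 0 = (p : R) ^ n * (u.coeff n * v.coeff n) := by
    have : WittVector.constantCoeff (x * (y * (p : 𝕎 R) ^ n))
        = x.coeff 0 * (y.coeff 0 * (p : R) ^ n) := by
      rw [map_mul, map_mul, map_pow, map_natCast]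
      rfl
    rw [show (x * (y * (p : 𝕎 R) ^ n)).coeff 0
        = WittVector.constantCoeff (x * (y * (p : 𝕎 R) ^ n)) from rfl, this, hx0, hy0]
    ring
  rw [key]
  have := WittVector.iterate_verschiebung_coeff (x * (y * (p : 𝕎 R) ^ n)) n 0
  rw [zero_add] at this
  rw [this, h0]

lemma map_nilradical_eq_zero (x : 𝕎 R) (hx : ∀ i, IsNilpotent (x.coeff i)) :
    WittVector.map (Ideal.Quotient.mk (nilradical R)) x = 0 := by
  ext i
  rw [WittVector.map_coeff, WittVector.zero_coeff, Ideal.Quotient.eq_zero_iff_mem]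
  exact mem_nilradical.2 (hx i)

lemma pow_coeff_nilpotent (x : 𝕎 R) (hx : ∀ i, IsNilpotent (x.coeff i)) (m : ℕ)
    (hm : 0 < m) (i : ℕ) : IsNilpotent ((x ^ m).coeff i) := by
  have h := map_nilradical_eq_zero x hx
  have h2 : WittVector.map (Ideal.Quotient.mk (nilradical R)) (x ^ m) = 0 := by
    rw [map_pow, h, zero_pow hm.ne']
  have h3 := congrArg (fun z => WittVector.coeff z i) h2
  simp only [WittVector.map_coeff, WittVector.zero_coeff] at h3
  rw [← mem_nilradical, ← Ideal.Quotient.eq_zero_iff_mem]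
  exact h3

lemma pow_coeff_eq_zero (x : 𝕎 R) (hx : ∀ i, IsNilpotent (x.coeff i)) (n : ℕ) :
    ∃ N, 0 < N ∧ ∀ i < n, (x ^ N).coeff i = 0 := by
  induction n with
  | zero => exact ⟨1, one_pos, fun i h => absurd h (Nat.not_lt_zero i)⟩
  | succ n ih =>
    obtain ⟨N, hN, hNv⟩ := ih
    obtain ⟨m, hm⟩ := pow_coeff_nilpotent x hx N hN n
    set c := (x ^ N).coeff n with hc
    have key : ∀ j : ℕ, (∀ i < n, (x ^ (N * 2 ^ j)).coeff i = 0) ∧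
        ∃ d : R, (x ^ (N * 2 ^ j)).coeff n = d * c ^ (2 ^ j) := by
      intro j
      induction j with
      | zero => exact ⟨by simpa using hNv, 1, by simp [hc]⟩
      | succ j ihj =>
        obtain ⟨hv, d, hd⟩ := ihj
        have hsq : x ^ (N * 2 ^ (j + 1)) = x ^ (N * 2 ^ j) * x ^ (N * 2 ^ j) := by
          rw [← pow_add]
          congr 1
          ring
        obtain ⟨h1, h2⟩ := mul_coeff_vanish (x ^ (N * 2 ^ j)) (x ^ (N * 2 ^ j)) n hv hv
        refine ⟨fun i hi => by rw [hsq]; exact h1 i hi, (p : R) ^ n * (d * d), ?_⟩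
        rw [hsq, h2, hd, pow_succ, pow_mul]
        ring
    obtain ⟨hv, d, hd⟩ := key m
    refine ⟨N * 2 ^ m, by positivity, ?_⟩
    intro i hi
    rcases Nat.lt_or_ge i n with h | h
    · exact hv i h
    · have : i = n := by omega
      subst this
      have hce : c ^ (2 ^ m) = 0 := by
        have hle : m ≤ 2 ^ m := (Nat.lt_two_pow_self (n := m)).le
        calc c ^ (2 ^ m) = c ^ m * c ^ (2 ^ m - m) := by rw [← pow_add]; congr 1; omega
        _ = 0 := by rw [hm, zero_mul]
      rw [hd, hce, mul_zero]

lemma truncate_isNilpotent (x : 𝕎 R) (hx : ∀ i, IsNilpotent (x.coeff i)) (n : ℕ) :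
    IsNilpotent (WittVector.truncate n x) := by
  obtain ⟨N, _, h⟩ := pow_coeff_eq_zero x hx n
  refine ⟨N, ?_⟩
  rw [← map_pow]
  exact RingHom.mem_ker.mp ((WittVector.mem_ker_truncate _ _).2 h)

lemma isUnit_of_truncate (x : 𝕎 R)
    (h : ∀ n, IsUnit (WittVector.truncate (p := p) n x)) : IsUnit x := by
  set v : ∀ n, TruncatedWittVector p n R := fun n => ↑(h n).unit⁻¹ with hv
  have hmul : ∀ n, WittVector.truncate n x * v n = 1 := by
    intro n
    rw [hv]
    simp
  have hcompat : ∀ (k n : ℕ) (hkn : k ≤ n),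
      TruncatedWittVector.truncate hkn (v n) = v k := by
    intro k n hkn
    have h1 : WittVector.truncate k x * TruncatedWittVector.truncate hkn (v n) = 1 := by
      rw [← TruncatedWittVector.truncate_wittVector_truncate hkn, ← map_mul, hmul, map_one]
    calc TruncatedWittVector.truncate hkn (v n)
        = (WittVector.truncate k x * v k) * TruncatedWittVector.truncate hkn (v n) := by
          rw [hmul, one_mul]
      _ = (WittVector.truncate k x * TruncatedWittVector.truncate hkn (v n)) * v k := by ring
      _ = v k := by rw [h1, one_mul]
  set U : 𝕎 R := WittVector.mk p (fun k => (v (k + 1)).coeff ⟨k, Nat.lt_succ_self k⟩) with hU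
  have truncU : ∀ n, WittVector.truncate n U = v n := by
    intro n
    apply TruncatedWittVector.ext
    intro i
    rw [WittVector.coeff_truncate]
    have hUc : U.coeff (i : ℕ) = (v ((i : ℕ) + 1)).coeff ⟨i, Nat.lt_succ_self _⟩ := by
      rw [hU]; rfl
    rw [hUc, ← hcompat ((i : ℕ) + 1) n i.2, TruncatedWittVector.coeff_truncate]
    exact congrArg (fun j => TruncatedWittVector.coeff j (v n)) (Fin.ext rfl)
  have hfin : x * U = 1 := by
    have hker : x * U - 1 ∈ ⨅ i : ℕ, RingHom.ker (WittVector.truncate (p := p) (R := R) i) := by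
      rw [Ideal.mem_iInf]
      intro n
      rw [RingHom.mem_ker, map_sub, map_mul, map_one, truncU, hmul, sub_self]
    rw [TruncatedWittVector.iInf_ker_truncate, Ideal.mem_bot] at hker
    linear_combination hker
  exact IsUnit.of_mul_eq_one _ hfin

end Stmt18Aux

/-- Let `p` be a prime and `R` a commutative ring in which `p` is
nilpotent. Let `a ∈ R`, let `w ∈ W(R)` be a `p`-typical Witt vector with `F(w) = 0`,
and suppose `ν ∈ W(R)` satisfies `V(ν) = p·1 − [a]·w`. Then `ν` is a unit in `W(R)`. -/
theorem stmt_18 (p : ℕ) [Fact p.Prime] (R : Type*) [CommRing R]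
    (hnil : IsNilpotent (p : R)) (a : R) (w : WittVector p R)
    (hw : WittVector.frobenius w = 0) (ν : WittVector p R)
    (hν : WittVector.verschiebung ν =
      (p : WittVector p R) * 1 - WittVector.teichmuller p a * w) :
    IsUnit ν := by
  rcases subsingleton_or_nontrivial R with hR | hR
  · have hs : Subsingleton (WittVector p R) :=
      ⟨fun a b => by ext n; exact Subsingleton.elim _ _⟩
    rw [Subsingleton.elim ν 1]
    exact isUnit_one
  -- the reduced quotient
  set f : R →+* R ⧸ nilradical R := Ideal.Quotient.mk (nilradical R) with hf
  have hreduced : IsReduced (R ⧸ nilradical R) :=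
    (Ideal.isRadical_iff_quotient_reduced _).mp (Ideal.radical_isRadical (0 : Ideal R))
  have hnetop : nilradical R ≠ ⊤ := by
    intro htop
    have h1 : (1 : R) ∈ nilradical R := htop ▸ Submodule.mem_top
    obtain ⟨k, hk⟩ := mem_nilradical.1 h1
    rw [one_pow] at hk
    exact one_ne_zero hk
  haveI : Nontrivial (R ⧸ nilradical R) := Ideal.Quotient.nontrivial_iff.mpr hnetop
  have hp0 : ((p : ℕ) : R ⧸ nilradical R) = 0 := by
    rw [← map_natCast f]
    exact Ideal.Quotient.eq_zero_iff_mem.2 (mem_nilradical.2 hnil)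
  haveI : CharP (R ⧸ nilradical R) p :=
    (CharP.charP_iff_prime_eq_zero (Fact.out : p.Prime)).2 hp0
  -- the image of w is zero
  have hw' : WittVector.map f w = 0 := by
    have h1 : WittVector.map f (WittVector.frobenius w)
        = WittVector.frobenius (WittVector.map f w) :=
      (WittVector.frobenius_isPoly p).map f w
    rw [hw, map_zero] at h1
    ext n
    have h2 := congrArg (fun z => WittVector.coeff z n) h1
    simp only [WittVector.zero_coeff, WittVector.coeff_frobenius_charP] at h2
    have h3 : IsNilpotent ((WittVector.map f w).coeff n) :=
      ⟨p, h2.symm⟩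
    rw [WittVector.zero_coeff]
    exact h3.eq_zero
  -- the image of ν is one
  have hν' : WittVector.verschiebung (WittVector.map f ν) = (p : WittVector p (R ⧸ nilradical R)) := by
    have h1 := congrArg (WittVector.map f) hν
    rw [WittVector.map_verschiebung, map_sub, map_mul, map_mul, map_one,
      WittVector.map_teichmuller, hw', mul_zero, sub_zero, map_natCast, mul_one] at h1
    exact h1
  have hV1 : WittVector.verschiebung (WittVector.map f ν)
      = WittVector.verschiebung (1 : WittVector p (R ⧸ nilradical R)) := by
    rw [hν']
    have := WittVector.verschiebung_frobenius (1 : WittVector p (R ⧸ nilradical R))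
    rw [map_one, one_mul] at this
    exact this.symm
  have hν1 : WittVector.map f ν = 1 := by
    ext n
    have h2 := congrArg (fun z => WittVector.coeff z (n + 1)) hV1
    simpa only [WittVector.verschiebung_coeff_succ] using h2
  -- coefficients of ν - 1 are nilpotent
  have hcoeff : ∀ n, IsNilpotent ((ν - 1).coeff n) := by
    intro n
    rw [← mem_nilradical, ← Ideal.Quotient.eq_zero_iff_mem]
    have h4 : f ((ν - 1).coeff n) = (WittVector.map f (ν - 1)).coeff n :=
      (WittVector.map_coeff f _ n).symm
    rw [h4, map_sub, hν1, map_one, sub_self, WittVector.zero_coeff]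
  -- conclude
  apply Stmt18Aux.isUnit_of_truncate
  intro n
  have h5 : WittVector.truncate n ν = 1 + WittVector.truncate n (ν - 1) := by
    rw [map_sub, map_one]
    ring
  rw [h5]
  exact (Stmt18Aux.truncate_isNilpotent (ν - 1) hcoeff n).isUnit_one_add
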